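/- Let A ∈ ℍ^{m×n} be a quaternion matrix, let S₁ ∈ ℍ^{n×p} and T₁ ∈ ℍ^{q×m}, let Y ∈ ℍ^{p×q} be a {1}-inverse of T₁AS₁, and set X = S₁YT₁. Then X satisfies the three conditions XAX = X, R_r(X) = R_r(S₁), and N_r(X) = N_r(T₁) if and only if rank(T₁AS₁) = rank(S₁) = rank(T₁); moreover, when these rank equalities hold, X is the unique quaternion matrix in ℍ^{n×m} satisfying these three conditions. -/

import Mathlib

open Matrix

noncomputable section

/-- The real quaternion division ring ℍ. -/
abbrev Quat : Type := Quaternion ℝ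

/-- Left range `R_l(A) = {xA : x ∈ ℍ^{1×m}} ⊆ ℍ^{1×n}`. -/
def leftRange {m n : ℕ} (A : Matrix (Fin m) (Fin n) Quat) : Set (Fin n → Quat) :=
  {y | ∃ x : Fin m → Quat, y = Matrix.vecMul x A}

/-- Left null space `N_l(A) = {x ∈ ℍ^{1×m} : xA = 0}`. -/
def leftNull {m n : ℕ} (A : Matrix (Fin m) (Fin n) Quat) : Set (Fin m → Quat) :=
  {x | Matrix.vecMul x A = 0}

/-- Right range `R_r(A) = {Ax : x ∈ ℍ^{n×1}} ⊆ ℍ^{m×1}`. -/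
def rightRange {m n : ℕ} (A : Matrix (Fin m) (Fin n) Quat) : Set (Fin m → Quat) :=
  {y | ∃ x : Fin n → Quat, y = Matrix.mulVec A x}

/-- Right null space `N_r(A) = {x ∈ ℍ^{n×1} : Ax = 0}`. -/
def rightNull {m n : ℕ} (A : Matrix (Fin m) (Fin n) Quat) : Set (Fin n → Quat) :=
  {x | Matrix.mulVec A x = 0}

/-- The rank of a quaternion matrix: the dimension of its left range
(the left ℍ-span of its rows) as a left ℍ-vector space. -/
def qRank {m n : ℕ} (A : Matrix (Fin m) (Fin n) Quat) : ℕ :=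
  Module.finrank Quat (Submodule.span Quat (Set.range (fun i : Fin m => A i)))

/-! ### Auxiliary lemmas -/

lemma qRank_eq_finrank_range {a b : ℕ} (A : Matrix (Fin a) (Fin b) Quat) :
    qRank A = Module.finrank Quat (LinearMap.range A.vecMulLinear) := by
  rw [qRank, range_vecMulLinear]
  rfl

lemma range_vecMulLinear_mul_le {a b c : ℕ} (M : Matrix (Fin a) (Fin b) Quat)
    (N : Matrix (Fin b) (Fin c) Quat) :
    LinearMap.range (M * N).vecMulLinear ≤ LinearMap.range N.vecMulLinear := by
  rintro _ ⟨x, rfl⟩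
  exact ⟨x ᵥ* M, by simp⟩

lemma qRank_mul_le_right {a b c : ℕ} (M : Matrix (Fin a) (Fin b) Quat)
    (N : Matrix (Fin b) (Fin c) Quat) : qRank (M * N) ≤ qRank N := by
  rw [qRank_eq_finrank_range, qRank_eq_finrank_range]
  exact Submodule.finrank_mono (range_vecMulLinear_mul_le M N)

lemma qRank_mul_le_left {a b c : ℕ} (M : Matrix (Fin a) (Fin b) Quat)
    (N : Matrix (Fin b) (Fin c) Quat) : qRank (M * N) ≤ qRank M := by
  rw [qRank_eq_finrank_range, qRank_eq_finrank_range]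
  have h : LinearMap.range (M * N).vecMulLinear =
      (LinearMap.range M.vecMulLinear).map N.vecMulLinear := by
    ext y
    constructor
    · rintro ⟨x, rfl⟩
      exact ⟨x ᵥ* M, ⟨x, rfl⟩, by simp⟩
    · rintro ⟨_, ⟨x, rfl⟩, rfl⟩
      exact ⟨x, by simp⟩
  rw [h]
  exact Submodule.finrank_map_le _ _

lemma qRank_add_finrank_ker {a b : ℕ} (M : Matrix (Fin a) (Fin b) Quat) :
    qRank M + Module.finrank Quat (LinearMap.ker M.vecMulLinear) = a := by
  rw [qRank_eq_finrank_range]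
  rw [LinearMap.finrank_range_add_finrank_ker M.vecMulLinear, Module.finrank_fin_fun]

lemma qRank_eq_of_ker_eq {a b c : ℕ} {M : Matrix (Fin a) (Fin b) Quat}
    {N : Matrix (Fin a) (Fin c) Quat}
    (h : LinearMap.ker M.vecMulLinear = LinearMap.ker N.vecMulLinear) :
    qRank M = qRank N := by
  have h1 := qRank_add_finrank_ker M
  have h2 := qRank_add_finrank_ker N
  rw [h] at h1
  omega

lemma ker_eq_of_le_of_qRank_eq {a b c : ℕ} {M : Matrix (Fin a) (Fin b) Quat}
    {N : Matrix (Fin a) (Fin c) Quat}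
    (hle : LinearMap.ker M.vecMulLinear ≤ LinearMap.ker N.vecMulLinear)
    (h : qRank M = qRank N) :
    LinearMap.ker M.vecMulLinear = LinearMap.ker N.vecMulLinear := by
  apply Submodule.eq_of_le_of_finrank_eq hle
  have h1 := qRank_add_finrank_ker M
  have h2 := qRank_add_finrank_ker N
  omega

lemma quat_vec_eq_zero {k : ℕ} (v : Fin k → Quat) (h : ∑ j, v j * star (v j) = 0) :
    v = 0 := by
  have hc : ∑ j, v j * star (v j)
      = algebraMap ℝ Quat (∑ j, Quaternion.normSq (v j)) := by
    rw [map_sum]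
    refine Finset.sum_congr rfl fun j _ => ?_
    rw [Quaternion.algebraMap_def]
    exact Quaternion.self_mul_star (v j)
  rw [hc] at h
  have hsum : (∑ j, Quaternion.normSq (v j) : ℝ) = 0 :=
    Quaternion.algebraMap_injective (h.trans (map_zero _).symm)
  have hz : ∀ j ∈ Finset.univ, Quaternion.normSq (v j) = 0 := by
    rw [← Finset.sum_eq_zero_iff_of_nonneg (fun j _ => Quaternion.normSq_nonneg)]
    exact hsum
  funext j
  simpa using Quaternion.normSq_eq_zero.mp (hz j (Finset.mem_univ j))

lemma aux_dot {a b : ℕ} (A : Matrix (Fin a) (Fin b) Quat) (x : Fin a → Quat)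
    (w : Fin b → Quat) :
    ∑ i, (w ᵥ* Aᴴ) i * star (x i) = ∑ j, w j * star ((x ᵥ* A) j) := by
  simp only [Matrix.vecMul, dotProduct, Matrix.conjTranspose_apply,
    Finset.sum_mul, star_sum, Finset.mul_sum]
  rw [Finset.sum_comm]
  refine Finset.sum_congr rfl fun j _ => Finset.sum_congr rfl fun i _ => ?_
  rw [StarMul.star_mul, mul_assoc]

lemma ker_mul_conjTranspose {a b : ℕ} (A : Matrix (Fin a) (Fin b) Quat) :
    LinearMap.ker (A * Aᴴ).vecMulLinear = LinearMap.ker A.vecMulLinear := by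
  ext x
  simp only [LinearMap.mem_ker, Matrix.vecMulLinear_apply]
  constructor
  · intro h
    have hv : (x ᵥ* A) ᵥ* Aᴴ = 0 := by rw [Matrix.vecMul_vecMul]; exact h
    have hzero : ∑ j, (x ᵥ* A) j * star ((x ᵥ* A) j) = 0 := by
      rw [← aux_dot A x (x ᵥ* A), hv]
      simp
    exact quat_vec_eq_zero _ hzero
  · intro h
    rw [← Matrix.vecMul_vecMul, h, Matrix.zero_vecMul]

lemma qRank_conjTranspose {a b : ℕ} (A : Matrix (Fin a) (Fin b) Quat) :
    qRank Aᴴ = qRank A := by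
  have aux : ∀ (a b : ℕ) (A : Matrix (Fin a) (Fin b) Quat), qRank A ≤ qRank Aᴴ := by
    intro a b A
    calc qRank A = qRank (A * Aᴴ) := (qRank_eq_of_ker_eq (ker_mul_conjTranspose A)).symm
      _ ≤ qRank Aᴴ := qRank_mul_le_right _ _
  refine le_antisymm ?_ (aux a b A)
  have := aux b a Aᴴ
  simpa using this

lemma exists_left_factor {k l c : ℕ} {M : Matrix (Fin k) (Fin c) Quat}
    {N : Matrix (Fin l) (Fin c) Quat}
    (h : ∀ i, M i ∈ LinearMap.range N.vecMulLinear) :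
    ∃ W : Matrix (Fin k) (Fin l) Quat, M = W * N := by
  choose w hw using h
  refine ⟨Matrix.of w, Matrix.ext fun i j => ?_⟩
  have h2 : (w i ᵥ* N) j = M i j := congrFun (hw i) j
  rw [← h2, Matrix.mul_apply]
  simp [Matrix.vecMul, dotProduct]

lemma exists_right_factor {k l c : ℕ} {M : Matrix (Fin c) (Fin k) Quat}
    {N : Matrix (Fin c) (Fin l) Quat}
    (h : rightRange M ⊆ rightRange N) :
    ∃ V : Matrix (Fin l) (Fin k) Quat, M = N * V := by
  have hcol : ∀ j : Fin k, (fun i => M i j) ∈ rightRange M := fun j =>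
    ⟨Pi.single j 1, by rw [Matrix.mulVec_single_one]; rfl⟩
  choose v hv using fun j => h (hcol j)
  refine ⟨Matrix.of (fun i j => v j i), Matrix.ext fun i j => ?_⟩
  have h2 : M i j = (N *ᵥ v j) i := congrFun (hv j) i
  rw [h2, Matrix.mul_apply]
  simp [Matrix.mulVec, dotProduct]

lemma mul_eq_zero_of_rightNull_subset {a b c d : ℕ} {M : Matrix (Fin a) (Fin b) Quat}
    {M' : Matrix (Fin c) (Fin b) Quat} {N : Matrix (Fin b) (Fin d) Quat}
    (h : rightNull M ⊆ rightNull M') (hMN : M * N = 0) : M' * N = 0 := by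
  refine Matrix.ext fun i j => ?_
  have hcol : M *ᵥ (fun k => N k j) = 0 := by
    funext i'
    have h3 := congrFun (congrFun hMN i') j
    simpa [Matrix.mul_apply, Matrix.mulVec, dotProduct] using h3
  have h2 : (fun k => N k j) ∈ rightNull M' := h hcol
  have h4 := congrFun h2 i
  simpa [Matrix.mul_apply, Matrix.mulVec, dotProduct] using h4

lemma vecMul_conjTranspose_eq_zero_iff {a b : ℕ} (M : Matrix (Fin a) (Fin b) Quat)
    (x : Fin b → Quat) : x ᵥ* Mᴴ = 0 ↔ M *ᵥ (star x) = 0 := by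
  have key : x ᵥ* Mᴴ = star (M *ᵥ star x) := by
    rw [Matrix.star_mulVec, star_star]
  rw [key]
  exact star_eq_zero

lemma rightNull_eq_iff_ker_conjTranspose_eq {a b c : ℕ} (M : Matrix (Fin a) (Fin b) Quat)
    (N : Matrix (Fin c) (Fin b) Quat) :
    rightNull M = rightNull N ↔
      LinearMap.ker Mᴴ.vecMulLinear = LinearMap.ker Nᴴ.vecMulLinear := by
  constructor
  · intro h
    ext x
    simp only [LinearMap.mem_ker, Matrix.vecMulLinear_apply,
      vecMul_conjTranspose_eq_zero_iff]
    constructor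
    · intro hx
      have hmem : star x ∈ rightNull M := hx
      rw [h] at hmem
      exact hmem
    · intro hx
      have hmem : star x ∈ rightNull N := hx
      rw [← h] at hmem
      exact hmem
  · intro h
    ext x
    have hM := vecMul_conjTranspose_eq_zero_iff M (star x)
    have hN := vecMul_conjTranspose_eq_zero_iff N (star x)
    rw [star_star] at hM hN
    constructor
    · intro hx
      have hmem : star x ∈ LinearMap.ker Mᴴ.vecMulLinear := by
        simpa [LinearMap.mem_ker] using hM.mpr hx
      rw [h] at hmem
      exact hN.mp (by simpa [LinearMap.mem_ker] using hmem)
    · intro hx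
      have hmem : star x ∈ LinearMap.ker Nᴴ.vecMulLinear := by
        simpa [LinearMap.mem_ker] using hN.mpr hx
      rw [← h] at hmem
      exact hM.mp (by simpa [LinearMap.mem_ker] using hmem)

/-- Theorem 3.4 (d). -/
theorem stmt9 {m n p q : ℕ} (A : Matrix (Fin m) (Fin n) Quat)
    (S₁ : Matrix (Fin n) (Fin p) Quat) (T₁ : Matrix (Fin q) (Fin m) Quat)
    (Y : Matrix (Fin p) (Fin q) Quat)
    (hY : (T₁ * A * S₁) * Y * (T₁ * A * S₁) = T₁ * A * S₁)
    (X : Matrix (Fin n) (Fin m) Quat) (hX : X = S₁ * Y * T₁) :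
    ((X * A * X = X ∧ rightRange X = rightRange S₁ ∧ rightNull X = rightNull T₁) ↔
      (qRank (T₁ * A * S₁) = qRank S₁ ∧ qRank (T₁ * A * S₁) = qRank T₁)) ∧
    (qRank (T₁ * A * S₁) = qRank S₁ → qRank (T₁ * A * S₁) = qRank T₁ →
      ∀ Z : Matrix (Fin n) (Fin m) Quat,
        Z * A * Z = Z → rightRange Z = rightRange S₁ → rightNull Z = rightNull T₁ →
          Z = X) := by
  set B := T₁ * A * S₁ with hB
  have key : qRank B = qRank S₁ → qRank B = qRank T₁ →
      (X * A * S₁ = S₁ ∧ T₁ * A * X = T₁) := by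
    intro h1 h2
    -- factor S₁ = W * B
    have hleS : LinearMap.range B.vecMulLinear ≤ LinearMap.range S₁.vecMulLinear := by
      rw [hB]; exact range_vecMulLinear_mul_le (T₁ * A) S₁
    have heqS : LinearMap.range B.vecMulLinear = LinearMap.range S₁.vecMulLinear :=
      Submodule.eq_of_le_of_finrank_eq hleS
        (by rw [← qRank_eq_finrank_range, ← qRank_eq_finrank_range, h1])
    obtain ⟨W, hW⟩ : ∃ W : Matrix (Fin n) (Fin q) Quat, S₁ = W * B := by
      apply exists_left_factor
      intro i
      rw [heqS]
      exact ⟨Pi.single i 1, by simp [Matrix.row_apply']⟩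
    -- factor T₁ = B * V
    have hBH : Bᴴ = (S₁ᴴ * Aᴴ) * T₁ᴴ := by
      rw [hB]; simp [Matrix.conjTranspose_mul, Matrix.mul_assoc]
    have hleT : LinearMap.range Bᴴ.vecMulLinear ≤ LinearMap.range T₁ᴴ.vecMulLinear := by
      rw [hBH]; exact range_vecMulLinear_mul_le _ _
    have heqT : LinearMap.range Bᴴ.vecMulLinear = LinearMap.range T₁ᴴ.vecMulLinear :=
      Submodule.eq_of_le_of_finrank_eq hleT
        (by rw [← qRank_eq_finrank_range, ← qRank_eq_finrank_range,
          qRank_conjTranspose, qRank_conjTranspose, h2])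
    obtain ⟨W', hW'⟩ : ∃ W' : Matrix (Fin m) (Fin p) Quat, T₁ᴴ = W' * Bᴴ := by
      apply exists_left_factor
      intro i
      rw [heqT]
      refine ⟨Pi.single i 1, funext fun j => ?_⟩
      simp [Matrix.conjTranspose_apply]
    have hV : T₁ = B * W'ᴴ := by
      have h := congrArg Matrix.conjTranspose hW'
      simpa [Matrix.conjTranspose_mul] using h
    constructor
    · calc X * A * S₁ = S₁ * Y * B := by rw [hX, hB]; simp only [Matrix.mul_assoc]
        _ = W * B * (Y * B) := by rw [hW, Matrix.mul_assoc]
        _ = W * (B * (Y * B)) := by simp only [Matrix.mul_assoc]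
        _ = W * B := by rw [← Matrix.mul_assoc B Y B, hY]
        _ = S₁ := hW.symm
    · calc T₁ * A * X = B * (Y * T₁) := by rw [hX, hB]; simp only [Matrix.mul_assoc]
        _ = B * (Y * (B * W'ᴴ)) := by rw [hV]
        _ = B * Y * B * W'ᴴ := by simp only [Matrix.mul_assoc]
        _ = B * W'ᴴ := by rw [hY]
        _ = T₁ := hV.symm
  refine ⟨⟨?_, ?_⟩, ?_⟩
  · -- forward direction
    rintro ⟨hxa, hrr, hrn⟩
    have r1 : qRank B ≤ qRank S₁ := by
      rw [hB]; exact qRank_mul_le_right (T₁ * A) S₁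
    have r2 : qRank B ≤ qRank T₁ := by
      rw [hB, Matrix.mul_assoc]; exact qRank_mul_le_left T₁ (A * S₁)
    have hfac : X = S₁ * Y * B * (Y * T₁) := by
      conv_lhs => rw [← hxa]
      rw [hX, hB]; simp only [Matrix.mul_assoc]
    have rXB : qRank X ≤ qRank B := by
      rw [hfac]
      exact le_trans (qRank_mul_le_left _ _) (qRank_mul_le_right _ _)
    have rS : qRank S₁ ≤ qRank X := by
      obtain ⟨U, hU⟩ := exists_right_factor (M := S₁) (N := X) hrr.symm.subset
      rw [hU]; exact qRank_mul_le_left _ _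
    have rT : qRank T₁ = qRank X := by
      have hker := (rightNull_eq_iff_ker_conjTranspose_eq X T₁).mp hrn
      have h := qRank_eq_of_ker_eq hker
      rw [qRank_conjTranspose, qRank_conjTranspose] at h
      exact h.symm
    exact ⟨le_antisymm r1 (rS.trans rXB), le_antisymm r2 (by rw [rT]; exact rXB)⟩
  · -- backward direction
    rintro ⟨h1, h2⟩
    obtain ⟨hS, hT⟩ := key h1 h2
    refine ⟨?_, ?_, ?_⟩
    · calc X * A * X = X * A * S₁ * (Y * T₁) := by rw [hX]; simp only [Matrix.mul_assoc]
        _ = S₁ * (Y * T₁) := by rw [hS]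
        _ = X := by rw [hX, Matrix.mul_assoc]
    · apply Set.Subset.antisymm
      · rintro _ ⟨x, rfl⟩
        exact ⟨(Y * T₁) *ᵥ x, by rw [hX, Matrix.mul_assoc, Matrix.mulVec_mulVec]⟩
      · rintro _ ⟨x, rfl⟩
        refine ⟨(A * S₁) *ᵥ x, ?_⟩
        rw [Matrix.mulVec_mulVec, ← Matrix.mul_assoc, hS]
    · ext x
      simp only [rightNull, Set.mem_setOf_eq]
      constructor
      · intro hx
        have h0 : (T₁ * A) *ᵥ (X *ᵥ x) = 0 := by rw [hx, Matrix.mulVec_zero]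
        rw [Matrix.mulVec_mulVec, hT] at h0
        exact h0
      · intro hx
        have h0 : (S₁ * Y) *ᵥ (T₁ *ᵥ x) = 0 := by rw [hx, Matrix.mulVec_zero]
        rw [Matrix.mulVec_mulVec] at h0
        rw [hX]
        exact h0
  · -- uniqueness
    intro h1 h2 Z hz1 hz2 hz3
    obtain ⟨hS, hT⟩ := key h1 h2
    obtain ⟨G, hG⟩ := exists_right_factor (M := Z) (N := S₁) hz2.subset
    have hXf : X = S₁ * (Y * T₁) := by rw [hX, Matrix.mul_assoc]
    have hTAZ : T₁ * A * Z = T₁ := by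
      have hzero : Z * (A * Z - 1) = 0 := by
        rw [Matrix.mul_sub, Matrix.mul_one, ← Matrix.mul_assoc, hz1, sub_self]
      have h0 : T₁ * (A * Z - 1) = 0 :=
        mul_eq_zero_of_rightNull_subset hz3.subset hzero
      rw [Matrix.mul_sub, Matrix.mul_one, sub_eq_zero] at h0
      rw [Matrix.mul_assoc]
      exact h0
    have hdiff : T₁ * A * (Z - X) = 0 := by
      rw [Matrix.mul_sub, hTAZ, hT, sub_self]
    have hZX : Z - X = S₁ * (G - Y * T₁) := by
      rw [Matrix.mul_sub, ← hG, ← hXf]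
    have hBzero : B * (G - Y * T₁) = 0 := by
      rw [hB, Matrix.mul_assoc, ← hZX]
      exact hdiff
    -- rightNull B ⊆ rightNull S₁
    have hBH : Bᴴ = (S₁ᴴ * Aᴴ) * T₁ᴴ := by
      rw [hB]; simp [Matrix.conjTranspose_mul, Matrix.mul_assoc]
    have hkerle : LinearMap.ker S₁ᴴ.vecMulLinear ≤ LinearMap.ker Bᴴ.vecMulLinear := by
      intro x hx
      simp only [LinearMap.mem_ker, Matrix.vecMulLinear_apply] at hx ⊢
      rw [hBH, ← Matrix.vecMul_vecMul, ← Matrix.vecMul_vecMul, hx,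
        Matrix.zero_vecMul, Matrix.zero_vecMul]
    have hkereq : LinearMap.ker S₁ᴴ.vecMulLinear = LinearMap.ker Bᴴ.vecMulLinear := by
      apply ker_eq_of_le_of_qRank_eq hkerle
      rw [qRank_conjTranspose, qRank_conjTranspose]
      exact h1.symm
    have hnull : rightNull B ⊆ rightNull S₁ :=
      ((rightNull_eq_iff_ker_conjTranspose_eq B S₁).mpr hkereq.symm).subset
    have hfinal : S₁ * (G - Y * T₁) = 0 :=
      mul_eq_zero_of_rightNull_subset hnull hBzero
    have hzx : Z - X = 0 := by rw [hZX, hfinal]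
    exact sub_eq_zero.mp hzx
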